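/- Let R be a ring and define P ⊆ R to be a Michler-prime right ideal if P is a proper right ideal and aRb ⊆ P implies a ∈ P or b ∈ P. Then a proper right ideal P is Michler-prime if and only if R/P is a prime module, i.e., every nonzero submodule of R/P has the same annihilator as R/P. -/
import Mathlib


/-- A proper right ideal `P` of `R` is Michler-prime (`aRb ⊆ P` implies
`a ∈ P` or `b ∈ P`) iff `R/P` is a prime module, i.e. every nonzero submodule
of `R/P` has the same annihilator as `R/P`.  Right ideals are
`Rᵐᵒᵖ`-submodules of `R` and `R/P` is a right `R`-module, i.e. an
`Rᵐᵒᵖ`-module. -/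
theorem stmt19 (R : Type*) [Ring R] (P : Submodule Rᵐᵒᵖ R) (hP : P ≠ ⊤) :
    (∀ a b : R, (∀ r : R, a * r * b ∈ P) → a ∈ P ∨ b ∈ P) ↔
      (∀ N : Submodule Rᵐᵒᵖ (R ⧸ P), N ≠ ⊥ →
        ∀ s : Rᵐᵒᵖ, ((∀ n ∈ N, s • n = 0) ↔ (∀ m : R ⧸ P, s • m = 0))) := by
  have smul_mk : ∀ (s : Rᵐᵒᵖ) (x : R),
      s • (Submodule.Quotient.mk x : R ⧸ P) = Submodule.Quotient.mk (x * s.unop) := by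
    intro s x
    rw [← Submodule.Quotient.mk_smul]
    rfl
  constructor
  · intro hM N hN s
    constructor
    · intro hs m
      obtain ⟨n, hnN, hn0⟩ := Submodule.ne_bot_iff N |>.mp hN
      obtain ⟨a, rfl⟩ := Submodule.Quotient.mk_surjective P n
      obtain ⟨x, rfl⟩ := Submodule.Quotient.mk_surjective P m
      have haP : a ∉ P := fun h => hn0 ((Submodule.Quotient.mk_eq_zero P).mpr h)
      have key : ∀ r, a * r * (x * s.unop) ∈ P := by
        intro r
        have h1 : (MulOpposite.op (r * x)) • (Submodule.Quotient.mk a : R ⧸ P) ∈ N :=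
          N.smul_mem _ hnN
        have h2 := hs _ h1
        rw [smul_mk, MulOpposite.unop_op, smul_mk, Submodule.Quotient.mk_eq_zero] at h2
        have : a * (r * x) * s.unop = a * r * (x * s.unop) := by simp [mul_assoc]
        rwa [this] at h2
      rcases hM a (x * s.unop) key with h | h
      · exact absurd h haP
      · rw [smul_mk, Submodule.Quotient.mk_eq_zero]
        exact h
    · intro hs n _
      exact hs n
  · intro h a b hab
    by_cases ha : a ∈ P
    · exact Or.inl ha
    · right
      set n : R ⧸ P := Submodule.Quotient.mk a with hn_def
      have hn : n ≠ 0 := fun h0 => ha ((Submodule.Quotient.mk_eq_zero P).mp h0)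
      have hN : Submodule.span Rᵐᵒᵖ {n} ≠ ⊥ := by
        simpa [Submodule.span_singleton_eq_bot] using hn
      have hann : ∀ m ∈ Submodule.span Rᵐᵒᵖ {n}, (MulOpposite.op b) • m = 0 := by
        intro m hm
        obtain ⟨c, rfl⟩ := Submodule.mem_span_singleton.mp hm
        rw [hn_def, smul_mk, smul_mk, MulOpposite.unop_op, Submodule.Quotient.mk_eq_zero]
        have : a * c.unop * b = a * MulOpposite.unop c * b := rfl
        exact hab c.unop
      have := (h _ hN (MulOpposite.op b)).mp hann (Submodule.Quotient.mk 1)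
      rw [smul_mk, MulOpposite.unop_op, one_mul, Submodule.Quotient.mk_eq_zero] at this
      exact this
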